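/- Let Q_0, ..., Q_κ be (κ+1)×(κ+1) real matrices, and let v and w be vectors in ℝ^{κ+1}. If v · P · w = 0 for every product P = Q_{y_1} Q_{y_2} ⋯ Q_{y_d} of at most κ+1 of the matrices Q_i (with repetitions allowed, including the empty product = identity), then v · P · w = 0 for every finite product P of the matrices Q_i of arbitrary length. -/
import Mathlib


open Matrix

theorem stmt_9 (κ : ℕ) (Q : Fin (κ+1) → Matrix (Fin (κ+1)) (Fin (κ+1)) ℝ)
    (v w : Fin (κ+1) → ℝ)
    (h : ∀ l : List (Fin (κ+1)), l.length ≤ κ + 1 →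
      v ⬝ᵥ ((l.map Q).prod).mulVec w = 0) :
    ∀ l : List (Fin (κ+1)), v ⬝ᵥ ((l.map Q).prod).mulVec w = 0 := by
  -- the spans
  set S : ℕ → Set (Fin (κ+1) → ℝ) := fun d =>
    { x | ∃ l : List (Fin (κ+1)), l.length ≤ d ∧ x = ((l.map Q).prod).mulVec w } with hS
  set f : ℕ → Submodule ℝ (Fin (κ+1) → ℝ) := fun d => Submodule.span ℝ (S d) with hf
  have hSmono : ∀ {d e : ℕ}, d ≤ e → S d ⊆ S e := by
    rintro d e hde x ⟨l, hl, rfl⟩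
    exact ⟨l, hl.trans hde, rfl⟩
  have hmono : ∀ {d e : ℕ}, d ≤ e → f d ≤ f e := fun hde =>
    Submodule.span_mono (hSmono hde)
  -- images under Q i land one step higher
  have hmap : ∀ (d : ℕ) (i : Fin (κ+1)),
      Submodule.map (Matrix.mulVecLin (Q i)) (f d) ≤ f (d + 1) := by
    intro d i
    rw [hf, Submodule.map_span, Submodule.span_le]
    rintro x ⟨y, ⟨l, hl, rfl⟩, rfl⟩
    apply Submodule.subset_span
    refine ⟨i :: l, by simpa using hl, ?_⟩
    simp [Matrix.mulVec_mulVec]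
  -- one-step stabilization
  have hstep : ∀ d : ℕ, f d = f (d + 1) → f (d + 1) = f (d + 2) := by
    intro d hd
    refine le_antisymm (hmono (by omega)) ?_
    rw [hf, Submodule.span_le]
    rintro x ⟨l, hl, rfl⟩
    match l with
    | [] => exact Submodule.subset_span ⟨[], by simp, rfl⟩
    | i :: l' =>
      have hl' : l'.length ≤ d + 1 := by simpa using hl
      have hy : ((l'.map Q).prod).mulVec w ∈ f d := by
        rw [hd]; exact Submodule.subset_span ⟨l', hl', rfl⟩
      have := hmap d i ⟨_, hy, rfl⟩
      simpa [Matrix.mulVec_mulVec] using this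
  -- there exists d ≤ κ + 1 with f d = f (d+1)
  have hex : ∃ d, d ≤ κ + 1 ∧ f d = f (d + 1) := by
    by_contra hc
    push_neg at hc
    have key : ∀ d, d ≤ κ + 2 → d ≤ Module.finrank ℝ (f d) := by
      intro d
      induction d with
      | zero => intro _; exact Nat.zero_le _
      | succ d ih =>
        intro hd
        have hlt : f d < f (d + 1) :=
          lt_of_le_of_ne (hmono (by omega)) (hc d (by omega))
        have := Submodule.finrank_lt_finrank_of_lt hlt
        have := ih (by omega)
        omega
    have h1 : κ + 2 ≤ Module.finrank ℝ (f (κ + 2)) := key _ le_rfl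
    have h2 : Module.finrank ℝ (f (κ + 2)) ≤ Module.finrank ℝ (Fin (κ+1) → ℝ) :=
      Submodule.finrank_le _
    have h3 : Module.finrank ℝ (Fin (κ+1) → ℝ) = κ+1 := Module.finrank_fin_fun ℝ
    omega
  obtain ⟨d, hd, hfd⟩ := hex
  -- f stabilizes from d on
  have hstab : ∀ k, f (d + k) = f d := by
    have hsucc : ∀ k, f (d + k) = f (d + k + 1) := by
      intro k
      induction k with
      | zero => exact hfd
      | succ k ih => exact hstep (d + k) ih
    intro k
    induction k with
    | zero => rfl
    | succ k ih => exact (hsucc k).symm.trans ih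
  -- every f e ≤ f (κ + 1)
  have hle : ∀ e, f e ≤ f (κ + 1) := by
    intro e
    rcases le_or_gt e (κ + 1) with he | he
    · exact hmono he
    · have : f e = f d := by
        have : e = d + (e - d) := by omega
        rw [this]; exact hstab _
      rw [this]; exact hmono hd
  -- v is orthogonal to f (κ + 1)
  set φ : (Fin (κ+1) → ℝ) →ₗ[ℝ] ℝ :=
    { toFun := fun x => v ⬝ᵥ x
      map_add' := fun x y => dotProduct_add v x y
      map_smul' := fun c x => by simp [dotProduct_smul] } with hφ
  have hker : f (κ + 1) ≤ LinearMap.ker φ := by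
    rw [hf, Submodule.span_le]
    rintro x ⟨l, hl, rfl⟩
    simpa [LinearMap.mem_ker, hφ] using h l hl
  intro l
  have : ((l.map Q).prod).mulVec w ∈ f (κ + 1) :=
    hle l.length (Submodule.subset_span ⟨l, le_rfl, rfl⟩)
  simpa [hφ] using hker this
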